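/- A nonempty set A ⊆ 𝔹^n is an attractor of a Boolean network f under the most permissive semantics (i.e., all configurations of A have the same set of most-permissive-reachable binary configurations, equal to A) if and only if there exists a minimal hypercube h closed by f with c(h) = A. -/

import Mathlib

inductive PState : Type
  | zero | up | down | one
deriving DecidableEq

def PState.ofBool : Bool → PState
  | false => .zero
  | true  => .one

def PState.isBool (p : PState) : Prop := p = .zero ∨ p = .one

abbrev BN (n : ℕ) := (Fin n → Bool) → Fin n → Bool

def gamma {n : ℕ} (x : Fin n → PState) : Set (Fin n → Bool) :=
  {b | ∀ i (v : Bool), x i = PState.ofBool v → b i = v}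

def mpStep {n : ℕ} (f : BN n) (x y : Fin n → PState) : Prop :=
  ∃ i : Fin n, x i ≠ y i ∧ (∀ j, j ≠ i → x j = y j) ∧
    ((y i = .up ∧ x i ≠ .one ∧ ∃ z ∈ gamma x, f z i = true) ∨
     (y i = .one ∧ x i = .up) ∨
     (y i = .down ∧ x i ≠ .zero ∧ ∃ z ∈ gamma x, f z i = false) ∨
     (y i = .zero ∧ x i = .down))

def mpReachP {n : ℕ} (f : BN n) : (Fin n → PState) → (Fin n → PState) → Prop :=
  Relation.ReflTransGen (mpStep f)

def embed {n : ℕ} (x : Fin n → Bool) : Fin n → PState := fun i => PState.ofBool (x i)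

def mpReach {n : ℕ} (f : BN n) (x : Fin n → Bool) : Set (Fin n → Bool) :=
  {y | mpReachP f (embed x) (embed y)}

def cubeSet {n : ℕ} (h : Fin n → Option Bool) : Set (Fin n → Bool) :=
  {z | ∀ i b, h i = some b → z i = b}

def smaller {n : ℕ} (h h' : Fin n → Option Bool) : Prop :=
  ∀ i b, h' i = some b → h i = some b

def kClosed {n : ℕ} (f : BN n) (K : Finset (Fin n)) (h : Fin n → Option Bool) : Prop :=
  ∀ z ∈ cubeSet h, ∀ i ∈ K, h i = none ∨ h i = some (f z i)

def closedBy {n : ℕ} (f : BN n) (h : Fin n → Option Bool) : Prop :=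
  ∀ z ∈ cubeSet h, f z ∈ cubeSet h

def smallestClosed {n : ℕ} (f : BN n) (x : Fin n → Bool) (h : Fin n → Option Bool) : Prop :=
  x ∈ cubeSet h ∧ closedBy f h ∧
    ∀ h', x ∈ cubeSet h' → closedBy f h' → smaller h h'

def minClosed {n : ℕ} (f : BN n) (h : Fin n → Option Bool) : Prop :=
  closedBy f h ∧ ∀ h', closedBy f h' → smaller h' h → h' = h

def faStep {n : ℕ} (f : BN n) (x y : Fin n → Bool) : Prop :=
  ∃ i : Fin n, x i ≠ y i ∧ (∀ j, j ≠ i → x j = y j) ∧ y i = f x i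

def aStep {n : ℕ} (f : BN n) (x y : Fin n → Bool) : Prop :=
  x ≠ y ∧ ∀ i, x i ≠ y i → y i = f x i

def mnStep {n m : ℕ} (F : (Fin n → Fin (m+1)) → Fin n → ℤ)
    (x y : Fin n → Fin (m+1)) : Prop :=
  x ≠ y ∧ ∀ i, x i ≠ y i → ((y i : ℤ) = (x i : ℤ) + F x i)

def beta {n m : ℕ} (x : Fin n → Fin (m+1)) : Set (Fin n → Bool) :=
  {b | ∀ i, ((x i : ℕ) = 0 → b i = false) ∧ ((x i : ℕ) = m → b i = true)}

def refines {n m : ℕ} (F : (Fin n → Fin (m+1)) → Fin n → ℤ) (f : BN n) : Prop :=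
  ∀ x i, (F x i > 0 → ∃ b ∈ beta x, f b i = true) ∧
         (F x i < 0 → ∃ b ∈ beta x, f b i = false)

def alpha {n m : ℕ} (x : Fin n → Fin (m+1)) : Set (Fin n → PState) :=
  {p | ∀ i, ((x i : ℕ) = 0 ↔ p i = .zero) ∧ ((x i : ℕ) = m ↔ p i = .one)}

def bdStep {n : ℕ} (f : BN n) (L : Finset (Fin n)) (a b : Fin n → PState) : Prop :=
  mpStep f a b ∧ ∃ j, a j ≠ b j ∧ j ∉ L ∧ (a j).isBool ∧ ¬ (b j).isBool

def exhaustive {n : ℕ} (f : BN n) (x : Fin n → Bool) (L : Finset (Fin n))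
    (zhat : Fin n → PState) : Prop :=
  Relation.ReflTransGen (bdStep f L) (embed x) zhat ∧ ∀ z', ¬ bdStep f L zhat z'

section AuxMP

open Classical

variable {n : ℕ}

lemma ofBool_inj {v w : Bool} (h : PState.ofBool v = PState.ofBool w) : v = w := by
  cases v <;> cases w <;> simp_all [PState.ofBool]

lemma ofBool_ne_up (v : Bool) : PState.ofBool v ≠ .up := by cases v <;> simp [PState.ofBool]
lemma ofBool_ne_down (v : Bool) : PState.ofBool v ≠ .down := by cases v <;> simp [PState.ofBool]

def compat (h : Fin n → Option Bool) (p : Fin n → PState) : Prop :=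
  ∀ i b, h i = some b → p i = PState.ofBool b

lemma gamma_subset_cube {h : Fin n → Option Bool} {p : Fin n → PState}
    (hc : compat h p) : gamma p ⊆ cubeSet h := by
  intro z hz i b hb
  exact hz i b (hc i b hb)

lemma self_mem_gamma_embed (x : Fin n → Bool) : x ∈ gamma (embed x) := by
  intro i v hv
  exact ofBool_inj hv

lemma compat_embed_iff {h : Fin n → Option Bool} {x : Fin n → Bool} :
    compat h (embed x) ↔ x ∈ cubeSet h := by
  constructor
  · intro hc i b hb
    exact ofBool_inj (hc i b hb)
  · intro hx i b hb
    simp [embed, hx i b hb]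

lemma step_compat {f : BN n} {h : Fin n → Option Bool} {p q : Fin n → PState}
    (hcl : closedBy f h) (hc : compat h p) (hs : mpStep f p q) : compat h q := by
  obtain ⟨i, hne, hoth, hcases⟩ := hs
  intro j b hb
  by_cases hj : j = i
  · subst hj
    have hpj := hc j b hb
    exfalso
    rcases hcases with ⟨hq, hne1, z, hz, hfz⟩ | ⟨hq, hp⟩ | ⟨hq, hne0, z, hz, hfz⟩ | ⟨hq, hp⟩
    · have hzc : z ∈ cubeSet h := gamma_subset_cube hc hz
      have hfb := hcl z hzc j b hb
      cases b
      · rw [hfb] at hfz; exact Bool.noConfusion hfz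
      · exact hne1 (by simpa [PState.ofBool] using hpj)
    · exact ofBool_ne_up b (hpj ▸ hp)
    · have hzc : z ∈ cubeSet h := gamma_subset_cube hc hz
      have hfb := hcl z hzc j b hb
      cases b
      · exact hne0 (by simpa [PState.ofBool] using hpj)
      · rw [hfb] at hfz; exact Bool.noConfusion hfz
    · exact ofBool_ne_down b (hpj ▸ hp)
  · rw [← hoth j hj]; exact hc j b hb

lemma reach_compat {f : BN n} {h : Fin n → Option Bool} {p q : Fin n → PState}
    (hcl : closedBy f h) (hc : compat h p) (hr : mpReachP f p q) : compat h q := by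
  induction hr with
  | refl => exact hc
  | tail _ hstep ih => exact step_compat hcl ih hstep

lemma reach_subset {f : BN n} {h : Fin n → Option Bool} {x : Fin n → Bool}
    (hcl : closedBy f h) (hx : x ∈ cubeSet h) : mpReach f x ⊆ cubeSet h := by
  intro y hy
  exact compat_embed_iff.mp (reach_compat hcl (compat_embed_iff.mpr hx) hy)

lemma cube_nonempty (h : Fin n → Option Bool) : (cubeSet h).Nonempty :=
  ⟨fun i => (h i).getD false, fun i b hb => by simp [hb]⟩

lemma cube_mem_free (h : Fin n → Option Bool) (w : Fin n → Bool) :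
    (fun i => (h i).getD (w i)) ∈ cubeSet h := fun i b hb => by simp [hb]

lemma cube_ext {h h' : Fin n → Option Bool} (he : cubeSet h = cubeSet h') : h = h' := by
  funext i
  cases hhi : h i with
  | none =>
    cases hhi' : h' i with
    | none => rfl
    | some b =>
      exfalso
      have hz : (fun j => (h j).getD (if j = i then !b else false)) ∈ cubeSet h :=
        cube_mem_free h _
      have hz' := he ▸ hz
      have := hz' i b hhi'
      simp [hhi] at this
  | some b =>
    cases hhi' : h' i with
    | none =>
      exfalso
      have hz : (fun j => (h' j).getD (if j = i then !b else false)) ∈ cubeSet h' :=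
        cube_mem_free h' _
      have hz' : _ ∈ cubeSet h := he ▸ hz
      have := hz' i b hhi
      simp [hhi'] at this
    | some b' =>
      obtain ⟨z, hz⟩ := cube_nonempty h
      have h1 := hz i b hhi
      have h2 := (he ▸ hz) i b' hhi'
      rw [h1] at h2; rw [h2]

end AuxMP

theorem tst : True := trivial
section AuxMP2
open Classical
variable {n : ℕ}

lemma mpStep_update {f : BN n} {p : Fin n → PState} {i : Fin n} {v : PState}
    (hne : p i ≠ v)
    (hcond : (v = .up ∧ p i ≠ .one ∧ ∃ z ∈ gamma p, f z i = true) ∨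
             (v = .one ∧ p i = .up) ∨
             (v = .down ∧ p i ≠ .zero ∧ ∃ z ∈ gamma p, f z i = false) ∨
             (v = .zero ∧ p i = .down)) :
    mpStep f p (Function.update p i v) := by
  refine ⟨i, by simpa using hne, fun j hj => by simp [Function.update_of_ne hj], ?_⟩
  simpa using hcond

lemma gamma_eq_cube {h : Fin n → Option Bool} {p : Fin n → PState}
    (hc : compat h p) (ho : ∀ i, h i = none → p i = .up ∨ p i = .down) :
    gamma p = cubeSet h := by
  ext z
  constructor
  · intro hz i b hb
    exact hz i b (hc i b hb)
  · intro hz i v hv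
    cases hhi : h i with
    | some b =>
      have hpb := hc i b hhi
      rw [hv] at hpb
      rw [ofBool_inj hpb]
      exact hz i b hhi
    | none =>
      rcases ho i hhi with h' | h' <;> rw [hv] at h'
      · exact absurd h' (ofBool_ne_up v)
      · exact absurd h' (ofBool_ne_down v)

lemma TF_of_min {f : BN n} {h : Fin n → Option Bool} (hm : minClosed f h)
    {i : Fin n} (hi : h i = none) (v : Bool) : ∃ z ∈ cubeSet h, f z i = v := by
  set h' : Fin n → Option Bool := Function.update h i (some (!v)) with hh'
  have hsm : smaller h' h := by
    intro j b hb
    have hji : j ≠ i := fun hji => by rw [hji, hi] at hb; exact nomatch hb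
    rw [hh', Function.update_of_ne hji]; exact hb
  have hne : h' ≠ h := by
    intro he
    have := congrFun he i
    rw [hh', Function.update_self, hi] at this
    exact nomatch this
  have hncl : ¬ closedBy f h' := fun hcl => hne (hm.2 h' hcl hsm)
  rw [closedBy] at hncl
  push_neg at hncl
  obtain ⟨z, hz, hfz⟩ := hncl
  rw [cubeSet, Set.mem_setOf_eq] at hfz
  push_neg at hfz
  obtain ⟨j, b, hjb, hfb⟩ := hfz
  have hzc : z ∈ cubeSet h := fun k c hk => hz k c (hsm k c hk)
  by_cases hji : j = i
  · subst hji
    rw [hh', Function.update_self] at hjb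
    have hb : b = !v := by injection hjb with e; exact e.symm
    refine ⟨z, hzc, ?_⟩
    cases v <;> simp [hb] at hfb <;> simpa using hfb
  · exfalso
    rw [hh', Function.update_of_ne hji] at hjb
    exact hfb (hm.1 z hzc j b hjb)

lemma minClosed_smallest {f : BN n} {h : Fin n → Option Bool} (hm : minClosed f h)
    {x : Fin n → Bool} (hx : x ∈ cubeSet h) : smallestClosed f x h := by
  refine ⟨hx, hm.1, ?_⟩
  intro h' hx' hcl'
  set m : Fin n → Option Bool := fun i => match h i with | some b => some b | none => h' i
    with hmm
  have hsubh : ∀ z ∈ cubeSet m, z ∈ cubeSet h := by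
    intro z hz i b hb
    apply hz i b
    rw [hmm]; simp only; rw [hb]
  have hsubh' : ∀ z ∈ cubeSet m, z ∈ cubeSet h' := by
    intro z hz i b hb
    cases hhi : h i with
    | none =>
      apply hz i b
      rw [hmm]; simp only; rw [hhi]; exact hb
    | some b' =>
      have h1 : z i = b' := hz i b' (by rw [hmm]; simp only; rw [hhi])
      have h2 : x i = b' := hx i b' hhi
      have h3 : x i = b := hx' i b hb
      rw [h1, h2.symm, h3]
  have hclm : closedBy f m := by
    intro z hz i b hb
    cases hhi : h i with
    | none =>
      rw [hmm] at hb; simp only [hhi] at hb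
      exact hcl' z (hsubh' z hz) i b hb
    | some b' =>
      rw [hmm] at hb; simp only [hhi] at hb
      have : b' = b := by injection hb
      subst this
      exact hm.1 z (hsubh z hz) i b' hhi
  have hsmm : smaller m h := by
    intro i b hb
    rw [hmm]; simp only; rw [hb]
  have hme : m = h := hm.2 m hclm hsmm
  intro i b hb
  have hmi : m i = h i := congrFun hme i
  cases hhi : h i with
  | none =>
    exfalso
    have hmh : m i = h' i := by rw [hmm]; simp only; rw [hhi]
    rw [hhi, hmh, hb] at hmi
    exact nomatch hmi
  | some b' =>
    have h2 : x i = b' := hx i b' hhi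
    have h3 : x i = b := hx' i b hb
    rw [h2.symm.trans h3]

end AuxMP2
section AuxMP3
open Classical
variable {n : ℕ}

/-- the hypercube of binary-fixed coordinates of a pseudo-state -/
def kOf (p : Fin n → PState) : Fin n → Option Bool := fun i =>
  match p i with
  | .zero => some false
  | .one => some true
  | _ => none

lemma kOf_eq_some_iff {p : Fin n → PState} {i : Fin n} {b : Bool} :
    kOf p i = some b ↔ p i = PState.ofBool b := by
  cases hpi : p i <;> cases b <;> simp [kOf, hpi, PState.ofBool]

lemma gamma_eq_kOf (p : Fin n → PState) : gamma p = cubeSet (kOf p) := by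
  ext z
  constructor
  · intro hz i b hb
    exact hz i b (kOf_eq_some_iff.mp hb)
  · intro hz i v hv
    exact hz i v (kOf_eq_some_iff.mpr hv)

def partOpen (x : Fin n → Bool) (h : Fin n → Option Bool) (p : Fin n → PState) : Prop :=
  compat h p ∧ ∀ i, h i = none → p i = PState.ofBool (x i) ∨ p i = .up ∨ p i = .down

lemma opening_aux {f : BN n} {x : Fin n → Bool} {h : Fin n → Option Bool}
    (hs : smallestClosed f x h) :
    ∀ (m : ℕ) (p : Fin n → PState),
      (Finset.univ.filter (fun i => h i = none ∧ (p i = .zero ∨ p i = .one))).card ≤ m →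
      mpReachP f (embed x) p → partOpen x h p →
      ∃ q, mpReachP f (embed x) q ∧ compat h q ∧
        ∀ i, h i = none → q i = .up ∨ q i = .down := by
  intro m
  induction m with
  | zero =>
    intro p hcard hr ho
    refine ⟨p, hr, ho.1, fun i hi => ?_⟩
    have hni : i ∉ Finset.univ.filter (fun i => h i = none ∧ (p i = .zero ∨ p i = .one)) := by
      intro hmem
      have := Finset.card_pos.mpr ⟨i, hmem⟩
      omega
    simp only [Finset.mem_filter, Finset.mem_univ, true_and, not_and, not_or] at hni
    rcases ho.2 i hi with hb | hb | hb
    · exfalso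
      cases hxv : x i <;> rw [hxv] at hb <;> simp [PState.ofBool] at hb
      · exact (hni hi).1 hb
      · exact (hni hi).2 hb
    · exact Or.inl hb
    · exact Or.inr hb
  | succ m ih =>
    intro p hcard hr ho
    by_cases hS : (Finset.univ.filter (fun i => h i = none ∧ (p i = .zero ∨ p i = .one))) = ∅
    · exact ih p (by rw [hS]; simp) hr ho
    · obtain ⟨j, hj⟩ := Finset.nonempty_iff_ne_empty.mpr hS
      simp only [Finset.mem_filter, Finset.mem_univ, true_and] at hj
      obtain ⟨hjn, hjb⟩ := hj
      -- p j = ofBool (x j)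
      have hpj : p j = PState.ofBool (x j) := by
        rcases ho.2 j hjn with hb | hb | hb
        · exact hb
        · rw [hb] at hjb; rcases hjb with h1 | h1 <;> exact PState.noConfusion h1
        · rw [hb] at hjb; rcases hjb with h1 | h1 <;> exact PState.noConfusion h1
      -- the current gamma cube
      have hxk : x ∈ cubeSet (kOf p) := by
        intro i b hb
        rw [kOf_eq_some_iff] at hb
        cases hhi : h i with
        | some b' =>
          have := ho.1 i b' hhi
          rw [this] at hb
          rw [hs.1 i b' hhi, ofBool_inj hb]
        | none =>
          rcases ho.2 i hhi with h1 | h1 | h1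
          · rw [h1] at hb; exact ofBool_inj hb
          · rw [h1] at hb; exact absurd hb.symm (ofBool_ne_up b)
          · rw [h1] at hb; exact absurd hb.symm (ofBool_ne_down b)
      have hsmk : smaller (kOf p) h := by
        intro i b hb
        rw [kOf_eq_some_iff, ho.1 i b hb]
      have hnk : ¬ closedBy f (kOf p) := by
        intro hclk
        have := hs.2.2 (kOf p) hxk hclk j (x j)
          (kOf_eq_some_iff.mpr hpj)
        rw [hjn] at this
        exact nomatch this
      rw [closedBy] at hnk
      push_neg at hnk
      obtain ⟨z, hz, hfz⟩ := hnk
      rw [cubeSet, Set.mem_setOf_eq] at hfz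
      push_neg at hfz
      obtain ⟨l, b, hlb, hflb⟩ := hfz
      have hzh : z ∈ cubeSet h := fun i c hc => hz i c (hsmk i c hc)
      have hln : h l = none := by
        cases hhl : h l with
        | none => rfl
        | some b' =>
          exfalso
          have : kOf p l = some b' := hsmk l b' hhl
          rw [hlb] at this
          have hbb : b = b' := by injection this
          subst hbb
          exact hflb (hs.2.1 z hzh l b hhl)
      have hplb : p l = PState.ofBool b := kOf_eq_some_iff.mp hlb
      have hplx : p l = PState.ofBool (x l) := by
        rcases ho.2 l hln with h1 | h1 | h1
        · exact h1
        · rw [h1] at hplb; exact absurd hplb.symm (ofBool_ne_up b)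
        · rw [h1] at hplb; exact absurd hplb.symm (ofBool_ne_down b)
      have hbx : b = x l := ofBool_inj (hplb.symm.trans hplx)
      -- take the step at l
      set v : PState := if b then PState.down else PState.up with hv
      have hzg : z ∈ gamma p := by rw [gamma_eq_kOf]; exact hz
      have hstep : mpStep f p (Function.update p l v) := by
        apply mpStep_update
        · rw [hplb, hv]; cases b <;> simp [PState.ofBool]
        · rw [hv]; cases hbv : b
          · left
            refine ⟨by simp, by rw [hplb, hbv]; simp [PState.ofBool], z, hzg, ?_⟩
            rw [hbv] at hflb; simpa using hflb
          · right; right; left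
            refine ⟨by simp, by rw [hplb, hbv]; simp [PState.ofBool], z, hzg, ?_⟩
            rw [hbv] at hflb; simpa using hflb
      set p' := Function.update p l v with hp'
      have hvnb : v ≠ .zero ∧ v ≠ .one := by rw [hv]; cases b <;> simp
      have ho' : partOpen x h p' := by
        constructor
        · intro i c hc
          have hil : i ≠ l := fun hil => by rw [hil, hln] at hc; exact nomatch hc
          rw [hp', Function.update_of_ne hil]
          exact ho.1 i c hc
        · intro i hi
          by_cases hil : i = l
          · subst hil
            rw [hp', Function.update_self, hv]
            cases b <;> simp
          · rw [hp', Function.update_of_ne hil]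
            exact ho.2 i hi
      have hcard' : (Finset.univ.filter
          (fun i => h i = none ∧ (p' i = .zero ∨ p' i = .one))).card ≤ m := by
        have hsub : (Finset.univ.filter (fun i => h i = none ∧ (p' i = .zero ∨ p' i = .one)))
            ⊆ (Finset.univ.filter (fun i => h i = none ∧ (p i = .zero ∨ p i = .one))) \ {l} := by
          intro i hi
          simp only [Finset.mem_filter, Finset.mem_univ, true_and] at hi
          have hil : i ≠ l := by
            intro hil
            subst hil
            rw [hp', Function.update_self] at hi
            rcases hi.2 with h1 | h1
            · exact hvnb.1 h1
            · exact hvnb.2 h1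
          rw [Finset.mem_sdiff, Finset.mem_filter]
          refine ⟨⟨Finset.mem_univ i, hi.1, ?_⟩, by simpa using hil⟩
          rw [hp', Function.update_of_ne hil] at hi
          exact hi.2
        have hlt := Finset.card_le_card hsub
        have hmem : l ∈ (Finset.univ.filter (fun i => h i = none ∧ (p i = .zero ∨ p i = .one))) := by
          simp only [Finset.mem_filter, Finset.mem_univ, true_and]
          exact ⟨hln, by rw [hplx]; cases x l <;> simp [PState.ofBool]⟩
        have hsing : ({l} : Finset (Fin n)) ⊆
            (Finset.univ.filter (fun i => h i = none ∧ (p i = .zero ∨ p i = .one))) :=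
          Finset.singleton_subset_iff.mpr hmem
        have h2 := Finset.card_sdiff_of_subset hsing
        simp only [Finset.card_singleton] at h2
        omega
      exact ih p' hcard' (hr.tail hstep) ho'
end AuxMP3
section AuxMP4
open Classical
variable {n : ℕ}

def dirOf (b : Bool) : PState := if b then .up else .down

lemma phase1 {f : BN n} {h : Fin n → Option Bool}
    (hTF : ∀ i, h i = none → ∀ v : Bool, ∃ z ∈ cubeSet h, f z i = v)
    (y : Fin n → Bool) :
    ∀ (m : ℕ) (p : Fin n → PState),
      (Finset.univ.filter (fun i => h i = none ∧ p i ≠ dirOf (y i))).card ≤ m →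
      compat h p → (∀ i, h i = none → p i = .up ∨ p i = .down) →
      ∃ q, mpReachP f p q ∧ compat h q ∧ ∀ i, h i = none → q i = dirOf (y i) := by
  intro m
  induction m with
  | zero =>
    intro p hcard hc ho
    refine ⟨p, Relation.ReflTransGen.refl, hc, fun i hi => ?_⟩
    by_contra hne
    have : i ∈ Finset.univ.filter (fun i => h i = none ∧ p i ≠ dirOf (y i)) := by
      simp only [Finset.mem_filter, Finset.mem_univ, true_and]
      exact ⟨hi, hne⟩
    have := Finset.card_pos.mpr ⟨i, this⟩
    omega
  | succ m ih =>
    intro p hcard hc ho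
    by_cases hS : (Finset.univ.filter (fun i => h i = none ∧ p i ≠ dirOf (y i))) = ∅
    · exact ih p (by rw [hS]; simp) hc ho
    · obtain ⟨j, hj⟩ := Finset.nonempty_iff_ne_empty.mpr hS
      simp only [Finset.mem_filter, Finset.mem_univ, true_and] at hj
      obtain ⟨hjn, hjne⟩ := hj
      have hg : gamma p = cubeSet h := gamma_eq_cube hc ho
      -- p j is up/down and differs from dirOf (y j)
      have hstep : mpStep f p (Function.update p j (dirOf (y j))) := by
        apply mpStep_update hjne
        cases hyj : y j
        · -- target down, p j = up
          right; right; left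
          have hpj : p j = .up := by
            rcases ho j hjn with h1 | h1
            · exact h1
            · exfalso; rw [hyj] at hjne; exact hjne (by rw [h1]; rfl)
          obtain ⟨z, hz, hfz⟩ := hTF j hjn false
          exact ⟨by simp [dirOf], by rw [hpj]; simp, z, by rw [hg]; exact hz, hfz⟩
        · left
          have hpj : p j = .down := by
            rcases ho j hjn with h1 | h1
            · exfalso; rw [hyj] at hjne; exact hjne (by rw [h1]; rfl)
            · exact h1
          obtain ⟨z, hz, hfz⟩ := hTF j hjn true
          exact ⟨by simp [dirOf], by rw [hpj]; simp, z, by rw [hg]; exact hz, hfz⟩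
      set p' := Function.update p j (dirOf (y j)) with hp'
      have hc' : compat h p' := by
        intro i b hb
        have hij : i ≠ j := fun hij => by rw [hij, hjn] at hb; exact nomatch hb
        rw [hp', Function.update_of_ne hij]; exact hc i b hb
      have ho' : ∀ i, h i = none → p' i = .up ∨ p' i = .down := by
        intro i hi
        by_cases hij : i = j
        · subst hij
          rw [hp', Function.update_self]
          cases y i <;> simp [dirOf]
        · rw [hp', Function.update_of_ne hij]; exact ho i hi
      have hcard' : (Finset.univ.filter (fun i => h i = none ∧ p' i ≠ dirOf (y i))).card ≤ m := by
        have hsub : (Finset.univ.filter (fun i => h i = none ∧ p' i ≠ dirOf (y i)))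
            ⊆ (Finset.univ.filter (fun i => h i = none ∧ p i ≠ dirOf (y i))) \ {j} := by
          intro i hi
          simp only [Finset.mem_filter, Finset.mem_univ, true_and] at hi
          have hij : i ≠ j := by
            intro hij; subst hij
            rw [hp', Function.update_self] at hi
            exact hi.2 rfl
          rw [Finset.mem_sdiff, Finset.mem_filter]
          rw [hp', Function.update_of_ne hij] at hi
          exact ⟨⟨Finset.mem_univ i, hi⟩, by simpa using hij⟩
        have hlt := Finset.card_le_card hsub
        have hmem : j ∈ (Finset.univ.filter (fun i => h i = none ∧ p i ≠ dirOf (y i))) := by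
          simp only [Finset.mem_filter, Finset.mem_univ, true_and]
          exact ⟨hjn, hjne⟩
        have h2 := Finset.card_sdiff_of_subset (Finset.singleton_subset_iff.mpr hmem)
        simp only [Finset.card_singleton] at h2
        omega
      obtain ⟨q, hq1, hq2, hq3⟩ := ih p' hcard' hc' ho'
      exact ⟨q, Relation.ReflTransGen.head hstep hq1, hq2, hq3⟩

lemma phase2 {f : BN n} {h : Fin n → Option Bool} {y : Fin n → Bool}
    (hy : y ∈ cubeSet h) :
    ∀ (m : ℕ) (p : Fin n → PState),
      (Finset.univ.filter (fun i => p i ≠ embed y i)).card ≤ m →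
      compat h p → (∀ i, h i = none → p i = dirOf (y i) ∨ p i = embed y i) →
      mpReachP f p (embed y) := by
  intro m
  induction m with
  | zero =>
    intro p hcard hc ho
    have : p = embed y := by
      funext i
      by_contra hne
      have : i ∈ Finset.univ.filter (fun i => p i ≠ embed y i) := by
        simp only [Finset.mem_filter, Finset.mem_univ, true_and]; exact hne
      have := Finset.card_pos.mpr ⟨i, this⟩
      omega
    rw [this]
    exact Relation.ReflTransGen.refl
  | succ m ih =>
    intro p hcard hc ho
    by_cases hS : (Finset.univ.filter (fun i => p i ≠ embed y i)) = ∅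
    · exact ih p (by rw [hS]; simp) hc ho
    · obtain ⟨j, hj⟩ := Finset.nonempty_iff_ne_empty.mpr hS
      simp only [Finset.mem_filter, Finset.mem_univ, true_and] at hj
      have hjn : h j = none := by
        cases hhj : h j with
        | none => rfl
        | some b =>
          exfalso
          apply hj
          rw [hc j b hhj]
          simp [embed, hy j b hhj]
      have hpj : p j = dirOf (y j) := by
        rcases ho j hjn with h1 | h1
        · exact h1
        · exact absurd h1 hj
      have hstep : mpStep f p (Function.update p j (embed y j)) := by
        apply mpStep_update hj
        cases hyj : y j
        · right; right; right
          constructor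
          · simp [embed, hyj, PState.ofBool]
          · rw [hpj, hyj]; rfl
        · right; left
          constructor
          · simp [embed, hyj, PState.ofBool]
          · rw [hpj, hyj]; rfl
      set p' := Function.update p j (embed y j) with hp'
      have hc' : compat h p' := by
        intro i b hb
        by_cases hij : i = j
        · subst hij; rw [hjn] at hb; exact nomatch hb
        · rw [hp', Function.update_of_ne hij]; exact hc i b hb
      have ho' : ∀ i, h i = none → p' i = dirOf (y i) ∨ p' i = embed y i := by
        intro i hi
        by_cases hij : i = j
        · subst hij; right; rw [hp', Function.update_self]
        · rw [hp', Function.update_of_ne hij]; exact ho i hi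
      have hcard' : (Finset.univ.filter (fun i => p' i ≠ embed y i)).card ≤ m := by
        have hsub : (Finset.univ.filter (fun i => p' i ≠ embed y i))
            ⊆ (Finset.univ.filter (fun i => p i ≠ embed y i)) \ {j} := by
          intro i hi
          simp only [Finset.mem_filter, Finset.mem_univ, true_and] at hi
          have hij : i ≠ j := by
            intro hij; subst hij
            rw [hp', Function.update_self] at hi
            exact hi rfl
          rw [Finset.mem_sdiff, Finset.mem_filter]
          rw [hp', Function.update_of_ne hij] at hi
          exact ⟨⟨Finset.mem_univ i, hi⟩, by simpa using hij⟩
        have hlt := Finset.card_le_card hsub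
        have hmem : j ∈ (Finset.univ.filter (fun i => p i ≠ embed y i)) := by
          simp only [Finset.mem_filter, Finset.mem_univ, true_and]; exact hj
        have h2 := Finset.card_sdiff_of_subset (Finset.singleton_subset_iff.mpr hmem)
        simp only [Finset.card_singleton] at h2
        omega
      exact Relation.ReflTransGen.head hstep (ih p' hcard' hc' ho')

lemma reach_all {f : BN n} {h : Fin n → Option Bool} {x : Fin n → Bool}
    (hs : smallestClosed f x h)
    (hTF : ∀ i, h i = none → ∀ v : Bool, ∃ z ∈ cubeSet h, f z i = v) :
    cubeSet h ⊆ mpReach f x := by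
  intro y hy
  obtain ⟨q, hq1, hq2, hq3⟩ := opening_aux hs
    (Finset.univ.filter (fun i => h i = none ∧ (embed x i = .zero ∨ embed x i = .one))).card
    (embed x) le_rfl Relation.ReflTransGen.refl
    ⟨compat_embed_iff.mpr hs.1, fun i _ => Or.inl rfl⟩
  obtain ⟨q2, hq21, hq22, hq23⟩ := phase1 hTF y
    (Finset.univ.filter (fun i => h i = none ∧ q i ≠ dirOf (y i))).card q le_rfl hq2 hq3
  have hfin : mpReachP f q2 (embed y) := by
    apply phase2 hy (Finset.univ.filter (fun i => q2 i ≠ embed y i)).card q2 le_rfl hq22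
    intro i hi
    exact Or.inl (hq23 i hi)
  exact (hq1.trans hq21).trans hfin

end AuxMP4
section AuxMP5
open Classical
variable {n : ℕ}

lemma two_step {f : BN n} {x : Fin n → Bool} {i : Fin n} {v : Bool}
    (hfx : f x i = v) (hxi : x i ≠ v) : Function.update x i v ∈ mpReach f x := by
  set mid : PState := if v then .up else .down with hmid
  have hstep1 : mpStep f (embed x) (Function.update (embed x) i mid) := by
    apply mpStep_update
    · rw [hmid]; cases hx : x i <;> cases hv : v <;> simp_all [embed, PState.ofBool]
    · rw [hmid]; cases hv : v
      · right; right; left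
        refine ⟨by simp, ?_, x, self_mem_gamma_embed x, by rw [← hv]; exact hfx⟩
        have : x i = true := by
          cases hx : x i
          · exact absurd (hx.trans hv.symm) hxi
          · rfl
        simp [embed, this, PState.ofBool]
      · left
        refine ⟨by simp, ?_, x, self_mem_gamma_embed x, by rw [← hv]; exact hfx⟩
        have : x i = false := by
          cases hx : x i
          · rfl
          · exact absurd (hx.trans hv.symm) hxi
        simp [embed, this, PState.ofBool]
  have hstep2 : mpStep f (Function.update (embed x) i mid)
      (embed (Function.update x i v)) := by
    have hemb : embed (Function.update x i v) =
        Function.update (Function.update (embed x) i mid) i (PState.ofBool v) := by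
      funext j
      by_cases hij : j = i
      · subst hij; simp [embed, Function.update_self]
      · simp [embed, Function.update_of_ne hij]
    rw [hemb]
    apply mpStep_update
    · rw [Function.update_self, hmid]; cases v <;> simp [PState.ofBool]
    · rw [Function.update_self, hmid]; cases v
      · right; right; right; simp [PState.ofBool]
      · right; left; simp [PState.ofBool]
  exact Relation.ReflTransGen.head hstep1 (Relation.ReflTransGen.single hstep2)

end AuxMP5
theorem stmt9 {n : ℕ} (f : BN n) (A : Set (Fin n → Bool)) :
    (A.Nonempty ∧ ∀ x ∈ A, mpReach f x = A) ↔
      ∃ h : Fin n → Option Bool, minClosed f h ∧ cubeSet h = A := by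
  classical
  constructor
  · rintro ⟨⟨x0, hx0⟩, hA⟩
    set hm : Fin n → Option Bool := fun i =>
      if ∃ k, closedBy f k ∧ x0 ∈ cubeSet k ∧ (k i).isSome then some (x0 i) else none
      with hhm
    have hm_def : ∀ i, hm i =
        if ∃ k, closedBy f k ∧ x0 ∈ cubeSet k ∧ (k i).isSome then some (x0 i) else none :=
      fun i => rfl
    have hmi_some : ∀ i b, hm i = some b →
        b = x0 i ∧ ∃ k, closedBy f k ∧ x0 ∈ cubeSet k ∧ (k i).isSome := by
      intro i b hb
      rw [hm_def i] at hb
      by_cases hex : ∃ k, closedBy f k ∧ x0 ∈ cubeSet k ∧ (k i).isSome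
      · rw [if_pos hex] at hb
        exact ⟨(Option.some_inj.mp hb).symm, hex⟩
      · rw [if_neg hex] at hb; exact nomatch hb
    have hx0m : x0 ∈ cubeSet hm := by
      intro i b hb
      exact (hmi_some i b hb).1.symm
    have hclm : closedBy f hm := by
      intro z hz i b hb
      obtain ⟨hbx, k, hk1, hk2, hk3⟩ := hmi_some i b hb
      have hzk : z ∈ cubeSet k := by
        intro j c hc
        have hj : hm j = some (x0 j) := by
          rw [hm_def j, if_pos ⟨k, hk1, hk2, by rw [hc]; rfl⟩]
        rw [hz j (x0 j) hj, ← hk2 j c hc]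
      obtain ⟨c, hc⟩ := Option.isSome_iff_exists.mp hk3
      have := hk1 z hzk i c hc
      rw [this, ← hk2 i c hc, hbx]
    have hsm : smallestClosed f x0 hm := by
      refine ⟨hx0m, hclm, ?_⟩
      intro h' hx' hcl' i b hb
      rw [hm_def i, if_pos ⟨h', hcl', hx', by rw [hb]; rfl⟩, hx' i b hb]
    -- the TF property via the attractor hypothesis
    have hTF : ∀ i, hm i = none → ∀ v : Bool, ∃ z ∈ cubeSet hm, f z i = v := by
      intro i hi v
      by_contra hcon
      push_neg at hcon
      have hall : ∀ z ∈ cubeSet hm, f z i = !v := by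
        intro z hz
        cases hfv : f z i
        · cases v
          · exact absurd hfv (hcon z hz)
          · rfl
        · cases v
          · rfl
          · exact absurd hfv (hcon z hz)
      set h' : Fin n → Option Bool := Function.update hm i (some (!v)) with hh'
      have hsub' : ∀ z ∈ cubeSet h', z ∈ cubeSet hm := by
        intro z hz j c hc
        have hji : j ≠ i := fun hji => by rw [hji, hi] at hc; exact nomatch hc
        exact hz j c (by rw [hh', Function.update_of_ne hji]; exact hc)
      have hcl' : closedBy f h' := by
        intro z hz j c hc
        by_cases hji : j = i
        · subst hji
          rw [hh', Function.update_self] at hc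
          have : c = !v := by injection hc with e; exact e.symm
          rw [this]
          exact hall z (hsub' z hz)
        · rw [hh', Function.update_of_ne hji] at hc
          exact hclm z (hsub' z hz) j c hc
      by_cases hx0i : x0 i = !v
      · have hx0' : x0 ∈ cubeSet h' := by
          intro j c hc
          by_cases hji : j = i
          · subst hji
            rw [hh', Function.update_self] at hc
            have : c = !v := by injection hc with e; exact e.symm
            rw [this, hx0i]
          · rw [hh', Function.update_of_ne hji] at hc
            exact hx0m j c hc
        have := hsm.2.2 h' hx0' hcl' i (!v) (by rw [hh', Function.update_self])
        rw [hi] at this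
        exact nomatch this
      · have hx0v : x0 i ≠ !v := hx0i
        have hfx0 : f x0 i = !v := hall x0 hx0m
        have hy1 : Function.update x0 i (!v) ∈ mpReach f x0 := two_step hfx0 hx0v
        rw [hA x0 hx0] at hy1
        have hy1c : Function.update x0 i (!v) ∈ cubeSet h' := by
          intro j c hc
          by_cases hji : j = i
          · subst hji
            rw [hh', Function.update_self] at hc
            have : c = !v := by injection hc with e; exact e.symm
            rw [this, Function.update_self]
          · rw [hh', Function.update_of_ne hji] at hc
            rw [Function.update_of_ne hji]
            exact hx0m j c hc
        have hx0r : x0 ∈ mpReach f (Function.update x0 i (!v)) := by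
          rw [hA _ hy1]; exact hx0
        have := reach_subset hcl' hy1c hx0r i (!v) (by rw [hh', Function.update_self])
        exact hx0i this
    have hAc : cubeSet hm = A := by
      apply Set.Subset.antisymm
      · intro y hy
        rw [← hA x0 hx0]
        exact reach_all hsm hTF hy
      · rw [← hA x0 hx0]
        exact reach_subset hclm hx0m
    refine ⟨hm, ⟨hclm, ?_⟩, hAc⟩
    intro h' hcl' hsm'
    apply cube_ext
    apply Set.Subset.antisymm
    · intro z hz j c hc
      exact hz j c (hsm' j c hc)
    · obtain ⟨y, hy⟩ := cube_nonempty h'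
      have hyA : y ∈ A := by
        rw [← hAc]
        intro j c hc
        exact hy j c (hsm' j c hc)
      intro z hz
      have hzA : z ∈ A := hAc ▸ hz
      rw [← hA y hyA] at hzA
      exact reach_subset hcl' hy hzA
  · rintro ⟨h, ⟨hcl, hmin⟩, hAc⟩
    subst hAc
    refine ⟨cube_nonempty h, ?_⟩
    intro x hx
    apply Set.Subset.antisymm
    · exact reach_subset hcl hx
    · exact reach_all (minClosed_smallest ⟨hcl, hmin⟩ hx)
        (fun i hi v => TF_of_min ⟨hcl, hmin⟩ hi v)
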